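/- Assume conditions (A), (B), (C) and the growth condition, and for λ > 0 and x ∈ E_k define B_k(λ,x) = γ_k · g_k(e^{−λ/k})^{kx} · [ h_k^{(kx)}(g_k(e^{−λ/k})) − 1 ]. Then for each λ > 0, lim_{k→∞} sup_{x ∈ E_k} | B_k(λ,x) − e^{−λx} F(λ,x) | = 0. -/

import Mathlib

open MeasureTheory Filter Set

/-- `pgfEval p s = Σ_j p_j s^j` is the generating function of the sequence `p`. -/
noncomputable def pgfEval (p : ℕ → ℝ) (s : ℝ) : ℝ := ∑' j : ℕ, p j * s ^ j

/-- `p` is (the coefficient sequence of) a probability generating function. -/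
def IsPGF (p : ℕ → ℝ) : Prop := (∀ j, 0 ≤ p j) ∧ (∑' j : ℕ, p j) = 1

/-- The mean `g'(1−) = Σ_j j·p_j ∈ [0,∞]` of a probability generating function. -/
noncomputable def pgfMean (p : ℕ → ℝ) : ENNReal :=
  ∑' j : ℕ, (j : ENNReal) * ENNReal.ofReal (p j)

lemma IsPGF.summable {p : ℕ → ℝ} (h : IsPGF p) : Summable p := by
  by_contra hs
  have := tsum_eq_zero_of_not_summable hs
  rw [h.2] at this; norm_num at this

lemma IsPGF.summable_pow {p : ℕ → ℝ} (h : IsPGF p) {s : ℝ} (h0 : 0 ≤ s) (h1 : s ≤ 1) :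
    Summable (fun j => p j * s ^ j) := by
  refine Summable.of_nonneg_of_le (fun j => mul_nonneg (h.1 j) (pow_nonneg h0 j))
    (fun j => ?_) h.summable
  calc p j * s ^ j ≤ p j * 1 := by
        have : s ^ j ≤ 1 := pow_le_one₀ h0 h1
        nlinarith [h.1 j]
    _ = p j := mul_one _

lemma pgfEval_nonneg {p : ℕ → ℝ} (h : IsPGF p) {s : ℝ} (h0 : 0 ≤ s) :
    0 ≤ pgfEval p s :=
  tsum_nonneg fun j => mul_nonneg (h.1 j) (pow_nonneg h0 j)

lemma pgfEval_le_one {p : ℕ → ℝ} (h : IsPGF p) {s : ℝ} (h0 : 0 ≤ s) (h1 : s ≤ 1) :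
    pgfEval p s ≤ 1 := by
  rw [← h.2]
  refine Summable.tsum_le_tsum (fun j => ?_) (h.summable_pow h0 h1) h.summable
  calc p j * s ^ j ≤ p j * 1 := by
        have : s ^ j ≤ 1 := pow_le_one₀ h0 h1
        nlinarith [h.1 j]
    _ = p j := mul_one _

lemma pgfEval_one {p : ℕ → ℝ} (h : IsPGF p) : pgfEval p 1 = 1 := by
  simp [pgfEval, h.2]

lemma abs_pow_sub_pow {a b M : ℝ} (ha : 0 ≤ a) (hb : 0 ≤ b) (haM : a ≤ M) (hbM : b ≤ M)
    (n : ℕ) : |a ^ n - b ^ n| ≤ n * M ^ (n - 1) * |a - b| := by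
  induction n with
  | zero => simp
  | succ n ih =>
    have hM : 0 ≤ M := le_trans ha haM
    have key : a ^ (n+1) - b ^ (n+1) = a * (a ^ n - b ^ n) + (a - b) * b ^ n := by ring
    have h1 : |a ^ (n+1) - b ^ (n+1)| ≤ M * |a ^ n - b ^ n| + |a - b| * M ^ n := by
      rw [key]
      refine (abs_add_le _ _).trans ?_
      gcongr
      · rw [abs_mul]
        gcongr
        rw [abs_of_nonneg ha]; exact haM
      · rw [abs_mul]
        gcongr
        rw [abs_of_nonneg (pow_nonneg hb n)]
        exact pow_le_pow_left₀ hb hbM n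
    rcases Nat.eq_zero_or_pos n with hn | hn
    · subst hn; simpa using h1
    · have hn1 : (n : ℝ) ≥ 1 := by exact_mod_cast hn
      have hMn : M * M ^ (n - 1) = M ^ n := by
        have : n - 1 + 1 = n := by omega
        rw [← pow_succ', this]
      calc |a ^ (n+1) - b ^ (n+1)| ≤ M * (n * M ^ (n-1) * |a - b|) + |a - b| * M ^ n := by
            exact h1.trans (by nlinarith [mul_le_mul_of_nonneg_left ih hM])
        _ = (n * (M * M ^ (n-1)) + M ^ n) * |a - b| := by ring
        _ = ((n : ℝ) + 1) * M ^ n * |a - b| := by rw [hMn]; ring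
        _ = (↑(n + 1)) * M ^ ((n+1) - 1) * |a - b| := by push_cast; simp

lemma pgf_lip {p : ℕ → ℝ} (h : IsPGF p)
    (hsum : Summable (fun j : ℕ => (j : ℝ) * p j)) {u v : ℝ}
    (hu0 : 0 ≤ u) (hu1 : u ≤ 1) (hv0 : 0 ≤ v) (hv1 : v ≤ 1) :
    |pgfEval p u - pgfEval p v| ≤ (∑' j : ℕ, (j : ℝ) * p j) * |u - v| := by
  have hsu := h.summable_pow hu0 hu1
  have hsv := h.summable_pow hv0 hv1
  have hdiff : pgfEval p u - pgfEval p v = ∑' j : ℕ, (p j * u ^ j - p j * v ^ j) :=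
    (Summable.tsum_sub hsu hsv).symm
  have hptw : ∀ j : ℕ, ‖p j * u ^ j - p j * v ^ j‖ ≤ (j : ℝ) * p j * |u - v| := by
    intro j
    have h1 : |u ^ j - v ^ j| ≤ (j : ℝ) * 1 ^ (j - 1) * |u - v| :=
      abs_pow_sub_pow hu0 hv0 hu1 hv1 j
    rw [one_pow, mul_one] at h1
    calc ‖p j * u ^ j - p j * v ^ j‖ = p j * |u ^ j - v ^ j| := by
          rw [← mul_sub, Real.norm_eq_abs, abs_mul, abs_of_nonneg (h.1 j)]
      _ ≤ p j * ((j : ℝ) * |u - v|) := by nlinarith [h.1 j, abs_nonneg (u ^ j - v ^ j)]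
      _ = (j : ℝ) * p j * |u - v| := by ring
  have hsumabs : Summable (fun j : ℕ => ‖p j * u ^ j - p j * v ^ j‖) := by
    refine Summable.of_nonneg_of_le (fun j => norm_nonneg _) hptw ?_
    exact hsum.mul_right _
  calc |pgfEval p u - pgfEval p v| = ‖∑' j : ℕ, (p j * u ^ j - p j * v ^ j)‖ := by
        rw [hdiff, Real.norm_eq_abs]
    _ ≤ ∑' j : ℕ, ‖p j * u ^ j - p j * v ^ j‖ := norm_tsum_le_tsum_norm hsumabs
    _ ≤ ∑' j : ℕ, (j : ℝ) * p j * |u - v| := Summable.tsum_le_tsum hptw hsumabs (hsum.mul_right _)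
    _ = (∑' j : ℕ, (j : ℝ) * p j) * |u - v| := tsum_mul_right

lemma pgf_mean_bound {p : ℕ → ℝ} (h : IsPGF p) {cc d : ℝ} (hcc : 0 < cc) (hd : 0 ≤ d)
    (hb : ENNReal.ofReal cc * pgfMean p ≤ ENNReal.ofReal d) :
    Summable (fun j : ℕ => (j : ℝ) * p j) ∧ cc * (∑' j : ℕ, (j : ℝ) * p j) ≤ d := by
  have hmean : pgfMean p = ∑' j : ℕ, ENNReal.ofReal ((j : ℝ) * p j) := by
    unfold pgfMean
    congr 1; funext j
    rw [ENNReal.ofReal_mul (by positivity), ENNReal.ofReal_natCast]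
  have hfin : pgfMean p ≠ ⊤ := by
    intro htop
    rw [htop, ENNReal.mul_top (by simp [ENNReal.ofReal_eq_zero]; linarith)] at hb
    exact (hb.trans_lt ENNReal.ofReal_lt_top).ne rfl
  have hsum : Summable (fun j : ℕ => (j : ℝ) * p j) := by
    have := ENNReal.summable_toReal (by rw [← hmean]; exact hfin)
    refine this.congr fun j => ?_
    rw [ENNReal.toReal_ofReal (mul_nonneg (by positivity) (h.1 j))]
  constructor
  · exact hsum
  · have hofr : ENNReal.ofReal (cc * ∑' j : ℕ, (j : ℝ) * p j) ≤ ENNReal.ofReal d := by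
      rw [ENNReal.ofReal_mul hcc.le,
        ENNReal.ofReal_tsum_of_nonneg (fun j => mul_nonneg (by positivity) (h.1 j)) hsum, ← hmean]
      exact hb
    have hnn : 0 ≤ cc * ∑' j : ℕ, (j : ℝ) * p j := by
      have : 0 ≤ ∑' j : ℕ, (j : ℝ) * p j := tsum_nonneg fun j => mul_nonneg (by positivity) (h.1 j)
      positivity
    exact (ENNReal.ofReal_le_ofReal_iff hd).mp hofr

lemma one_sub_le_exp_neg (u : ℝ) : 1 - u ≤ Real.exp (-u) := by
  have := Real.add_one_le_exp (-u); linarith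

lemma exp_neg_le_inv_one_add {u : ℝ} (hu : 0 ≤ u) : Real.exp (-u) ≤ 1 / (1 + u) := by
  have h1 : 1 + u ≤ Real.exp u := by have := Real.add_one_le_exp u; linarith
  rw [Real.exp_neg]
  have h2 : 0 < 1 + u := by linarith
  rw [div_eq_mul_inv, one_mul]
  exact inv_anti₀ h2 h1

lemma mul_exp_neg_le {cx x : ℝ} (hc : 0 < cx) (hx : 0 ≤ x) :
    x * Real.exp (-(cx * x)) ≤ 1 / cx := by
  have h1 : cx * x ≤ Real.exp (cx * x) := by
    have := Real.add_one_le_exp (cx * x); linarith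
  have h2 : 0 < Real.exp (cx * x) := Real.exp_pos _
  rw [Real.exp_neg]
  rw [div_eq_mul_inv, one_mul]
  rw [mul_comm, inv_mul_le_iff₀ h2]
  calc x = cx * x / cx := by field_simp
    _ ≤ Real.exp (cx * x) / cx := by gcongr
    _ = Real.exp (cx * x) * cx⁻¹ := by rw [div_eq_mul_inv]
  

set_option maxHeartbeats 2000000

/-- under conditions (A), (B), (C) and the growth condition, with
`B_k(λ,x) = γ_k g_k(e^{−λ/k})^{kx} [h_k^{(kx)}(g_k(e^{−λ/k})) − 1]` for `x = j/k ∈ E_k`,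
one has `lim_{k→∞} sup_{x ∈ E_k} |B_k(λ,x) − e^{−λx} F(λ,x)| = 0` for each `λ > 0`. -/
theorem stmt11
    (b c : ℝ) (hc : 0 ≤ c)
    (m : Measure ℝ) (hm : IntegrableOn (fun z => min z (z ^ 2)) (Ioi 0) m)
    (ν : Measure ℝ) [SigmaFinite ν]
    (β : ℝ → ℝ) (q : ℝ → ℝ → ℝ)
    (hβmeas : Measurable β) (hqmeas : Measurable (Function.uncurry q))
    (hβpos : ∀ x, 0 ≤ x → 0 ≤ β x)
    (hqpos : ∀ x z, 0 ≤ x → 0 < z → 0 ≤ q x z)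
    (hqint : ∀ x, 0 ≤ x → IntegrableOn (fun z => q x z * z) (Ioi 0) ν)
    (K : ℝ) (hK : 0 ≤ K)
    (hgrowth : ∀ x, 0 ≤ x → β x + ∫ z in Ioi 0, q x z * z ∂ν ≤ K * (1 + x))
    (R : ℝ → ℝ)
    (hR : ∀ l, 0 ≤ l →
      R l = b * l + c * l ^ 2 + ∫ z in Ioi 0, (Real.exp (-l * z) - 1 + l * z) ∂m)
    (F : ℝ → ℝ → ℝ)
    (hF : ∀ l x, 0 ≤ l → 0 ≤ x →
      F l x = -(β x) * l + ∫ z in Ioi 0, (Real.exp (-l * z) - 1) * q x z ∂ν)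
    (γ : ℕ → ℝ) (hγpos : ∀ k, 1 ≤ k → 0 < γ k) (hγmono : Monotone γ)
    (hγtop : Tendsto γ atTop atTop)
    (gp : ℕ → ℕ → ℝ) (hgp : ∀ k, 1 ≤ k → IsPGF (gp k))
    (hp : ℕ → ℕ → ℕ → ℝ) (hhp : ∀ k i, 1 ≤ k → IsPGF (hp k i))
    -- condition (A)
    (condA1 : ∀ a : ℝ, 0 < a → ∃ L : NNReal, ∀ k : ℕ, 1 ≤ k → a ≤ (k : ℝ) →
      LipschitzOnWith L
        (fun l => (k : ℝ) * γ k * (pgfEval (gp k) (1 - l / k) - (1 - l / k)))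
        (Icc 0 a))
    (condA2 : ∀ l : ℝ, 0 ≤ l →
      Tendsto (fun k : ℕ => (k : ℝ) * γ k * (pgfEval (gp k) (1 - l / k) - (1 - l / k)))
        atTop (nhds (R l)))
    -- condition (B)
    (condB : ∀ a₁ a₂ : ℝ, 0 < a₁ → 0 < a₂ →
      TendstoUniformlyOn
        (fun (k : ℕ) (lx : ℝ × ℝ) =>
          γ k * (pgfEval (hp k ⌊(k : ℝ) * lx.2⌋₊) (1 - lx.1 / k) - 1))
        (fun lx => F lx.1 lx.2) atTop (Icc 0 a₁ ×ˢ Icc 0 a₂))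
    -- condition (C)
    (K₁ : ℝ) (hK₁ : 0 < K₁)
    (condC : ∀ k : ℕ, 1 ≤ k → ∀ x : ℝ, 0 ≤ x →
      ENNReal.ofReal (γ k / k) * pgfMean (hp k ⌊(k : ℝ) * x⌋₊)
        ≤ ENNReal.ofReal (K₁ * (1 + x)))
    (lam : ℝ) (hlam : 0 < lam) :
    ∀ ε > (0 : ℝ), ∀ᶠ k : ℕ in atTop, ∀ j : ℕ,
      |γ k * (pgfEval (gp k) (Real.exp (-lam / k))) ^ j
          * (pgfEval (hp k j) (pgfEval (gp k) (Real.exp (-lam / k))) - 1)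
        - Real.exp (-lam * ((j : ℝ) / k)) * F lam ((j : ℝ) / k)| < ε := by
  have hlam0 : (0:ℝ) ≤ lam := hlam.le
  -- auxiliary sequences
  set T : ℕ → ℝ := fun k => Real.exp (-lam / (k : ℝ)) with hTdef
  set S : ℕ → ℝ := fun k => pgfEval (gp k) (T k) with hSdef
  set Mu : ℕ → ℝ := fun k => (k : ℝ) * (1 - T k) with hMudef
  set Dk : ℕ → ℝ := fun k => (k : ℝ) * (S k - T k) with hDkdef
  set Lk : ℕ → ℝ := fun k => (k : ℝ) * (1 - S k) with hLkdef
  -- basic facts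
  have hT01 : ∀ k : ℕ, 1 ≤ k → 0 < T k ∧ T k ≤ 1 := by
    intro k hk
    constructor
    · exact Real.exp_pos _
    · apply Real.exp_le_one_iff.2
      have hkp : (0:ℝ) < k := by exact_mod_cast hk
      rw [neg_div]
      exact neg_nonpos.2 (by positivity)
  have hS01 : ∀ k : ℕ, 1 ≤ k → 0 ≤ S k ∧ S k ≤ 1 := by
    intro k hk
    exact ⟨pgfEval_nonneg (hgp k hk) (hT01 k hk).1.le,
      pgfEval_le_one (hgp k hk) (hT01 k hk).1.le (hT01 k hk).2⟩
  have hMu_mem : ∀ k : ℕ, 1 ≤ k → 0 ≤ Mu k ∧ Mu k ≤ lam := by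
    intro k hk
    have hkp : (0:ℝ) < k := by exact_mod_cast hk
    constructor
    · have := (hT01 k hk).2
      simp only [hMudef]
      nlinarith
    · have h1 : 1 - lam / k ≤ T k := by
        have := one_sub_le_exp_neg (lam / k)
        simpa [hTdef, neg_div] using this
      simp only [hMudef]
      have : (k:ℝ) * (1 - T k) ≤ (k:ℝ) * (lam / k) := by nlinarith
      calc (k:ℝ) * (1 - T k) ≤ (k:ℝ) * (lam / k) := this
        _ = lam := by field_simp
  have hMu_close : ∀ k : ℕ, 1 ≤ k → lam - Mu k ≤ lam ^ 2 / k := by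
    intro k hk
    have hkp : (0:ℝ) < k := by exact_mod_cast hk
    set u := lam / k with hu
    have hu0 : 0 ≤ u := by positivity
    have hTu : T k ≤ 1 - u + u ^ 2 := by
      have h1 : T k ≤ 1 / (1 + u) := by
        have := exp_neg_le_inv_one_add hu0
        simpa [hTdef, hu, neg_div] using this
      have h2 : 1 / (1 + u) ≤ 1 - u + u ^ 2 := by
        rw [div_le_iff₀ (by linarith : (0:ℝ) < 1 + u)]
        nlinarith
      linarith
    have hkl : (k:ℝ) * u = lam := by rw [hu]; field_simp
    have : lam - Mu k = (k:ℝ) * (T k - 1 + u) := by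
      simp only [hMudef]; rw [← hkl]; ring
    rw [this]
    have h3 : (k:ℝ) * (T k - 1 + u) ≤ (k:ℝ) * u ^ 2 := by nlinarith
    calc (k:ℝ) * (T k - 1 + u) ≤ (k:ℝ) * u ^ 2 := h3
      _ = lam ^ 2 / k := by rw [hu]; field_simp
  have hMu_tend : Tendsto Mu atTop (nhds lam) := by
    have h0 : Tendsto (fun k : ℕ => Mu k - lam) atTop (nhds 0) := by
      refine squeeze_zero_norm' ?_ (tendsto_const_div_atTop_nhds_zero_nat (lam ^ 2))
      · filter_upwards [eventually_ge_atTop 1] with k hk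
        have h1 := hMu_close k hk
        have h2 := (hMu_mem k hk).2
        rw [Real.norm_eq_abs, abs_of_nonpos (by linarith)]
        linarith
    have := h0.add (tendsto_const_nhds (x := lam))
    simpa using this
  -- Dk → 0
  have hDk_tend : Tendsto Dk atTop (nhds 0) := by
    obtain ⟨L, hL⟩ := condA1 lam hlam
    have hRlim := condA2 lam hlam0
    have hRb : ∀ᶠ k : ℕ in atTop,
        |(k : ℝ) * γ k * (pgfEval (gp k) (1 - lam / k) - (1 - lam / k)) - R lam| < 1 := by
      have := Metric.tendsto_atTop.mp hRlim 1 one_pos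
      obtain ⟨N, hN⟩ := this
      filter_upwards [eventually_ge_atTop N] with k hk
      have := hN k hk
      rwa [Real.dist_eq] at this
    have hkey : ∀ᶠ k : ℕ in atTop,
        |Dk k| ≤ ((L : ℝ) * lam ^ 2 + |R lam| + 1) / γ k := by
      filter_upwards [eventually_ge_atTop 1, hRb,
        eventually_atTop.2 ⟨⌈lam⌉₊, fun k hk =>
          le_trans (Nat.le_ceil lam) (Nat.cast_le.2 hk)⟩] with k hk hRbk hklam
      have hkp : (0:ℝ) < k := by exact_mod_cast hk
      have hγk := hγpos k hk
      have hTk : 1 - Mu k / k = T k := by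
        simp only [hMudef]; field_simp; ring
      have hmem1 : Mu k ∈ Icc (0:ℝ) lam := ⟨(hMu_mem k hk).1, (hMu_mem k hk).2⟩
      have hmem2 : lam ∈ Icc (0:ℝ) lam := ⟨hlam0, le_refl _⟩
      have hlip := (hL k hk hklam).dist_le_mul _ hmem1 _ hmem2
      rw [Real.dist_eq, Real.dist_eq] at hlip
      have hRkMu : (k : ℝ) * γ k * (pgfEval (gp k) (1 - Mu k / k) - (1 - Mu k / k))
          = γ k * Dk k := by
        rw [hTk]
        simp only [hDkdef, hSdef]
        ring
      rw [hRkMu] at hlip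
      have hMuL : |Mu k - lam| ≤ lam ^ 2 / k := by
        rw [abs_of_nonpos (by linarith [(hMu_mem k hk).2])]
        linarith [hMu_close k hk]
      have h5 : |γ k * Dk k| ≤ (L : ℝ) * lam ^ 2 + |R lam| + 1 := by
        have h6 : |γ k * Dk k - ((k : ℝ) * γ k * (pgfEval (gp k) (1 - lam / k) - (1 - lam / k)))|
            ≤ (L : ℝ) * (lam ^ 2 / k) := by
          refine hlip.trans ?_
          have : (0:ℝ) ≤ (L:ℝ) := L.2
          gcongr
        have hk1 : (1:ℝ) ≤ (k:ℝ) := by exact_mod_cast hk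
        have h7 : lam ^ 2 / k ≤ lam ^ 2 := by
          rw [div_le_iff₀ hkp]; nlinarith
        have := abs_sub_abs_le_abs_sub (γ k * Dk k)
          ((k : ℝ) * γ k * (pgfEval (gp k) (1 - lam / k) - (1 - lam / k)))
        have h8 := abs_sub_abs_le_abs_sub
          ((k : ℝ) * γ k * (pgfEval (gp k) (1 - lam / k) - (1 - lam / k))) (R lam)
        have hLnn : (0:ℝ) ≤ (L:ℝ) := L.2
        have h9 : (L:ℝ) * (lam ^ 2 / k) ≤ (L:ℝ) * lam ^ 2 := by nlinarith
        have habs := abs_abs_sub_abs_le_abs_sub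
          ((k : ℝ) * γ k * (pgfEval (gp k) (1 - lam / k) - (1 - lam / k))) (R lam)
        have h10 : |(k : ℝ) * γ k * (pgfEval (gp k) (1 - lam / k) - (1 - lam / k))|
            ≤ |R lam| + 1 := by
          have := abs_sub_abs_le_abs_sub
            ((k : ℝ) * γ k * (pgfEval (gp k) (1 - lam / k) - (1 - lam / k))) (R lam)
          linarith [hRbk]
        linarith [h6, h10]
      rw [abs_mul, abs_of_pos hγk] at h5
      rw [le_div_iff₀ hγk]
      linarith [h5]
    apply squeeze_zero_norm' hkey
    exact Tendsto.const_div_atTop hγtop _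
  have hLk_tend : Tendsto Lk atTop (nhds lam) := by
    have heq : Lk = fun k => Mu k - Dk k := by
      funext k; simp only [hLkdef, hMudef, hDkdef]; ring
    rw [heq]
    simpa using hMu_tend.sub hDk_tend
  -- bound on F
  have hFb : ∀ x : ℝ, 0 ≤ x → |F lam x| ≤ lam * (K * (1 + x)) := by
    intro x hx
    rw [hF lam x hlam0 hx]
    have hIg : Integrable (fun z => lam * (q x z * z)) (ν.restrict (Ioi 0)) :=
      (hqint x hx).const_mul lam
    have hae : ∀ᵐ z ∂(ν.restrict (Ioi 0)),
        ‖(Real.exp (-lam * z) - 1) * q x z‖ ≤ lam * (q x z * z) := by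
      refine (ae_restrict_iff' measurableSet_Ioi).2 (Eventually.of_forall fun z hz => ?_)
      have hz0 : (0:ℝ) < z := hz
      have hq0 := hqpos x z hx hz0
      have he1 : Real.exp (-lam * z) ≤ 1 := Real.exp_le_one_iff.2 (by nlinarith)
      have he2 : 1 - lam * z ≤ Real.exp (-lam * z) := by
        have := one_sub_le_exp_neg (lam * z)
        simpa [neg_mul] using this
      rw [Real.norm_eq_abs, abs_mul, abs_of_nonneg hq0, abs_of_nonpos (by linarith)]
      nlinarith
    have hInt := norm_integral_le_of_norm_le hIg hae
    rw [Real.norm_eq_abs] at hInt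
    have hIc : ∫ z in Ioi 0, lam * (q x z * z) ∂ν = lam * ∫ z in Ioi 0, q x z * z ∂ν :=
      integral_const_mul lam _
    rw [hIc] at hInt
    have htri := abs_add_le (-(β x) * lam) (∫ z in Ioi 0, (Real.exp (-lam * z) - 1) * q x z ∂ν)
    have hb1 : |(-(β x)) * lam| = β x * lam := by
      rw [abs_mul, abs_neg, abs_of_nonneg (hβpos x hx), abs_of_nonneg hlam0]
    have hgr := hgrowth x hx
    have : β x * lam + lam * ∫ z in Ioi 0, q x z * z ∂ν ≤ lam * (K * (1 + x)) := by
      nlinarith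
    calc |(-(β x)) * lam + ∫ z in Ioi 0, (Real.exp (-lam * z) - 1) * q x z ∂ν|
        ≤ |(-(β x)) * lam| + |∫ z in Ioi 0, (Real.exp (-lam * z) - 1) * q x z ∂ν| := htri
      _ ≤ β x * lam + lam * ∫ z in Ioi 0, q x z * z ∂ν := by rw [hb1]; linarith
      _ ≤ lam * (K * (1 + x)) := this
  -- floor identity
  have hfloor : ∀ k : ℕ, 1 ≤ k → ∀ j : ℕ, ⌊(k:ℝ) * ((j:ℝ)/(k:ℝ))⌋₊ = j := by
    intro k hk j
    have hkp : (0:ℝ) < k := by exact_mod_cast hk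
    have h : (k:ℝ) * ((j:ℝ)/(k:ℝ)) = (j:ℝ) := by field_simp
    rw [h, Nat.floor_natCast]
  -- mean facts
  have hMean : ∀ k : ℕ, 1 ≤ k → ∀ j : ℕ,
      Summable (fun n : ℕ => (n:ℝ) * hp k j n) ∧
      γ k / k * (∑' n : ℕ, (n:ℝ) * hp k j n) ≤ K₁ * (1 + (j:ℝ)/k) := by
    intro k hk j
    have hkp : (0:ℝ) < k := by exact_mod_cast hk
    have hx : (0:ℝ) ≤ (j:ℝ)/k := by positivity
    have hcc : 0 < γ k / k := div_pos (hγpos k hk) hkp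
    have hd : 0 ≤ K₁ * (1 + (j:ℝ)/k) := mul_nonneg hK₁.le (by positivity)
    have hcond := condC k hk ((j:ℝ)/k) hx
    rw [hfloor k hk j] at hcond
    exact pgf_mean_bound (hhp k j hk) hcc hd hcond
  -- Lipschitz consequence for h-pgfs
  have hFkLip : ∀ k : ℕ, 1 ≤ k → ∀ j : ℕ, ∀ u v : ℝ,
      0 ≤ u → u ≤ 1 → 0 ≤ v → v ≤ 1 →
      |γ k * (pgfEval (hp k j) u - pgfEval (hp k j) v)|
        ≤ K₁ * (1 + (j:ℝ)/k) * ((k:ℝ) * |u - v|) := by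
    intro k hk j u v hu0 hu1 hv0 hv1
    obtain ⟨hsum, hmb⟩ := hMean k hk j
    have hkp : (0:ℝ) < k := by exact_mod_cast hk
    have hγk := hγpos k hk
    have hl := pgf_lip (hhp k j hk) hsum hu0 hu1 hv0 hv1
    rw [abs_mul, abs_of_pos hγk]
    calc γ k * |pgfEval (hp k j) u - pgfEval (hp k j) v|
        ≤ γ k * ((∑' n : ℕ, (n:ℝ) * hp k j n) * |u - v|) :=
          mul_le_mul_of_nonneg_left hl hγk.le
      _ = (γ k / k * (∑' n : ℕ, (n:ℝ) * hp k j n)) * ((k:ℝ) * |u - v|) := by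
          field_simp
      _ ≤ K₁ * (1 + (j:ℝ)/k) * ((k:ℝ) * |u - v|) :=
          mul_le_mul_of_nonneg_right hmb (by positivity)
  -- main part
  intro ε hε
  set C₀ : ℝ := 1 + 4 / lam with hC₀def
  have hC₀pos : (0:ℝ) < C₀ := by rw [hC₀def]; positivity
  have hC0 : ∀ x : ℝ, 0 ≤ x → (1 + x) * Real.exp (-(lam * x / 4)) ≤ C₀ := by
    intro x hx
    have h1 : Real.exp (-(lam * x / 4)) ≤ 1 :=
      Real.exp_le_one_iff.2 (neg_nonpos.2 (by positivity))
    have h2 : x * Real.exp (-(lam * x / 4)) ≤ 4 / lam := by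
      have h3 := mul_exp_neg_le (show (0:ℝ) < lam/4 by positivity) hx
      have harg : -(lam / 4 * x) = -(lam * x / 4) := by ring
      rw [harg] at h3
      have h4 : 1 / (lam / 4) = 4 / lam := one_div_div _ _
      rw [h4] at h3
      exact h3
    have h5 := (Real.exp_pos (-(lam * x / 4))).le
    rw [hC₀def]
    nlinarith
  have hC0' : ∀ x : ℝ, 0 ≤ x →
      (1 + x) * Real.exp (-(lam * x / 2)) ≤ C₀ * Real.exp (-(lam * x / 4)) := by
    intro x hx
    have he : Real.exp (-(lam * x / 2))
        = Real.exp (-(lam * x / 4)) * Real.exp (-(lam * x / 4)) := by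
      rw [← Real.exp_add]; ring_nf
    rw [he, ← mul_assoc]
    exact mul_le_mul_of_nonneg_right (hC0 x hx) (Real.exp_pos _).le
  set C₁ : ℝ := Real.exp (lam / 2) * (2 / lam) with hC₁def
  have hC₁pos : (0:ℝ) < C₁ := by rw [hC₁def]; positivity
  set D : ℝ := lam * (2 * K₁ + K) * C₀ + 2 * lam * K * C₀ + 1 with hDdef
  have hDpos : (0:ℝ) < D := by
    have h1 : 0 ≤ lam * (2 * K₁ + K) * C₀ :=
      mul_nonneg (mul_nonneg hlam0 (by linarith)) hC₀pos.le
    have h2 : 0 ≤ 2 * lam * K * C₀ :=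
      mul_nonneg (mul_nonneg (by linarith) hK) hC₀pos.le
    rw [hDdef]; linarith
  obtain ⟨a₂, ha₂1, hDa₂⟩ : ∃ a₂ : ℝ, 1 ≤ a₂ ∧ D * Real.exp (-(lam * a₂ / 4)) < ε / 3 := by
    have harg : Tendsto (fun a : ℝ => -(lam * a / 4)) atTop atBot := by
      apply tendsto_neg_atTop_atBot.comp
      exact ((tendsto_id.const_mul_atTop hlam).atTop_div_const (by norm_num))
    have h2 : Tendsto (fun a : ℝ => D * Real.exp (-(lam * a / 4))) atTop (nhds (D * 0)) :=
      (Real.tendsto_exp_atBot.comp harg).const_mul D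
    rw [mul_zero] at h2
    have h3 := h2.eventually_lt_const (show (0:ℝ) < ε/3 by positivity)
    obtain ⟨a₂, ha⟩ := (h3.and (eventually_ge_atTop 1)).exists
    exact ⟨a₂, ha.2, ha.1⟩
  set ε₁ : ℝ := min (lam / 2) (ε / (3 * (K₁ * C₀ + 1))) with hε₁def
  have hε₁pos : 0 < ε₁ := by
    apply lt_min (by positivity)
    have : 0 < K₁ * C₀ + 1 := by positivity
    positivity
  set G : ℝ := C₁ * (lam * (K * (1 + a₂))) + 1 with hGdef
  have hGpos : (0:ℝ) < G := by
    have h1 : 0 ≤ C₁ * (lam * (K * (1 + a₂))) :=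
      mul_nonneg hC₁pos.le (mul_nonneg hlam0 (mul_nonneg hK (by linarith)))
    rw [hGdef]; linarith
  have e2 : ∀ᶠ k : ℕ in atTop, |Lk k - lam| < ε₁ := by
    obtain ⟨N, hN⟩ := Metric.tendsto_atTop.mp hLk_tend ε₁ hε₁pos
    filter_upwards [eventually_ge_atTop N] with k hk
    have := hN k hk; rwa [Real.dist_eq] at this
  have e3 : ∀ᶠ k : ℕ in atTop, |Dk k| < ε / (3 * G) := by
    obtain ⟨N, hN⟩ := Metric.tendsto_atTop.mp hDk_tend (ε / (3 * G)) (by positivity)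
    filter_upwards [eventually_ge_atTop N] with k hk
    have := hN k hk; rwa [Real.dist_eq, sub_zero] at this
  have e4 := (Metric.tendstoUniformlyOn_iff.mp
    (condB lam a₂ hlam (by linarith))) (ε/3) (by positivity)
  have e5 : ∀ᶠ k : ℕ in atTop, lam ≤ (k:ℝ) :=
    eventually_atTop.2 ⟨⌈lam⌉₊, fun k hk => le_trans (Nat.le_ceil lam) (Nat.cast_le.2 hk)⟩
  filter_upwards [eventually_ge_atTop 1, e5, e2, e3, e4] with k hk1 hklam hLke hDke hBe
  intro j
  have hkp : (0:ℝ) < k := by exact_mod_cast hk1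
  have hγk := hγpos k hk1
  have hSrw : pgfEval (gp k) (Real.exp (-lam / (k:ℝ))) = S k := by
    simp only [hSdef, hTdef]
  rw [hSrw]
  set x : ℝ := (j:ℝ) / k with hxdef
  have hx0 : 0 ≤ x := by rw [hxdef]; positivity
  have hfl : ⌊(k:ℝ) * x⌋₊ = j := by rw [hxdef]; exact hfloor k hk1 j
  have hs0 := (hS01 k hk1).1
  have hs1 := (hS01 k hk1).2
  have hLk0 : 0 ≤ Lk k := by simp only [hLkdef]; nlinarith
  have hLkk : Lk k ≤ (k:ℝ) := by simp only [hLkdef]; nlinarith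
  have habs := abs_lt.mp hLke
  have hε₁lam : ε₁ ≤ lam / 2 := min_le_left _ _
  have hε₁eps : ε₁ ≤ ε / (3 * (K₁ * C₀ + 1)) := min_le_right _ _
  have hhalf : lam / 2 ≤ Lk k := by linarith [habs.1]
  have hseq : S k = 1 - Lk k / k := by
    simp only [hLkdef]; field_simp; ring
  -- pow bounds
  have hsle : S k ≤ Real.exp (-(Lk k / k)) := by
    calc S k = 1 - Lk k / k := hseq
      _ ≤ Real.exp (-(Lk k / k)) := one_sub_le_exp_neg _
  have hsj_exp : S k ^ j ≤ Real.exp (-(lam * x / 2)) := by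
    calc S k ^ j ≤ Real.exp (-(Lk k / k)) ^ j := pow_le_pow_left₀ hs0 hsle j
      _ = Real.exp ((j:ℝ) * -(Lk k / k)) := (Real.exp_nat_mul _ j).symm
      _ ≤ Real.exp (-(lam * x / 2)) := by
          apply Real.exp_le_exp.2
          have hjx : (j:ℝ) * (Lk k / k) = Lk k * x := by rw [hxdef]; ring
          have h1 : lam / 2 * x ≤ Lk k * x :=
            mul_le_mul_of_nonneg_right hhalf hx0
          nlinarith [hjx]
  have htj : T k ^ j = Real.exp (-lam * x) := by
    have h1 : T k ^ j = Real.exp ((j:ℝ) * (-lam / k)) := by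
      rw [hTdef]; exact (Real.exp_nat_mul _ j).symm
    rw [h1]; congr 1; rw [hxdef]; ring
  have hsj1 : S k ^ j ≤ 1 := pow_le_one₀ hs0 hs1
  have hsj0 : 0 ≤ S k ^ j := pow_nonneg hs0 j

  -- pow difference bound
  have hpow : |S k ^ j - T k ^ j| ≤ C₁ * |Dk k| := by
    rcases Nat.eq_zero_or_pos j with hj | hj
    · subst hj; simp only [pow_zero, sub_self, abs_zero]; positivity
    · set M : ℝ := Real.exp (-(lam / (2 * k))) with hMdef
      have hM0 : (0:ℝ) ≤ M := (Real.exp_pos _).le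
      have hsM : S k ≤ M := by
        refine hsle.trans (Real.exp_le_exp.2 ?_)
        rw [neg_le_neg_iff]
        rw [div_le_div_iff₀ (by positivity) hkp]
        linarith [mul_le_mul_of_nonneg_right hhalf hkp.le]
      have htM : T k ≤ M := by
        rw [hTdef, hMdef]
        apply Real.exp_le_exp.2
        rw [neg_div, neg_le_neg_iff]
        rw [div_le_div_iff₀ (by positivity) hkp]
        linarith [mul_nonneg hlam0 hkp.le]
      have h1 := abs_pow_sub_pow hs0 (hT01 k hk1).1.le hsM htM j
      have hST : |S k - T k| = |Dk k| / k := by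
        have : Dk k = (k:ℝ) * (S k - T k) := by simp only [hDkdef]
        rw [this, abs_mul, abs_of_pos hkp]
        field_simp
      rw [hST] at h1
      have hj1 : (1:ℕ) ≤ j := hj
      have hMj : M ^ (j-1) = Real.exp (-(lam * ((j:ℝ)-1) / (2*k))) := by
        rw [hMdef, ← Real.exp_nat_mul]
        congr 1
        have hc : ((j-1:ℕ):ℝ) = (j:ℝ) - 1 := by
          push_cast [Nat.cast_sub hj1]; ring
        rw [hc]; ring
      have hkey : (j:ℝ) * M ^ (j-1) / k ≤ C₁ := by
        rw [hMj]
        have hsplit : Real.exp (-(lam * ((j:ℝ)-1) / (2*k)))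
            = Real.exp (lam/(2*k)) * Real.exp (-(lam/2 * x)) := by
          rw [← Real.exp_add]
          congr 1
          rw [hxdef]
          field_simp
          ring
        rw [hsplit]
        have h2 : x * Real.exp (-(lam/2 * x)) ≤ 2/lam := by
          have h3 := mul_exp_neg_le (show (0:ℝ) < lam/2 by positivity) hx0
          rw [one_div_div] at h3
          exact h3
        have h3 : Real.exp (lam/(2*k)) ≤ Real.exp (lam/2) := by
          apply Real.exp_le_exp.2
          rw [div_le_div_iff₀ (by positivity) (by norm_num : (0:ℝ) < 2)]
          have hk1r : (1:ℝ) ≤ (k:ℝ) := by exact_mod_cast hk1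
          linarith [mul_nonneg hlam0 (sub_nonneg.2 hk1r)]
        have heq : (j:ℝ) * (Real.exp (lam/(2*k)) * Real.exp (-(lam/2 * x))) / k
            = Real.exp (lam/(2*k)) * (x * Real.exp (-(lam/2 * x))) := by
          rw [hxdef]; ring
        rw [heq, hC₁def]
        exact mul_le_mul h3 h2 (by positivity) (Real.exp_pos _).le
      calc |S k ^ j - T k ^ j| ≤ (j:ℝ) * M ^ (j-1) * (|Dk k| / k) := h1
        _ = ((j:ℝ) * M ^ (j-1) / k) * |Dk k| := by ring
        _ ≤ C₁ * |Dk k| := mul_le_mul_of_nonneg_right hkey (abs_nonneg _)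
  -- argument bounds for h-pgf
  have hv0 : (0:ℝ) ≤ 1 - lam / k := by
    rw [sub_nonneg]; exact (div_le_one hkp).2 hklam
  have hv1 : 1 - lam / k ≤ 1 := by
    have : (0:ℝ) ≤ lam / k := by positivity
    linarith
  -- Term A1
  have hA1 : |S k ^ j * (γ k * (pgfEval (hp k j) (S k) - pgfEval (hp k j) (1 - lam / k)))|
      < ε / 3 := by
    have hlip := hFkLip k hk1 j (S k) (1 - lam/k) hs0 hs1 hv0 hv1
    have hdiff : (k:ℝ) * |S k - (1 - lam/k)| = |Lk k - lam| := by
      have h1 : S k - (1 - lam/k) = (lam - Lk k) / k := by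
        rw [hseq]; field_simp; ring
      rw [h1, abs_div, abs_of_pos hkp, ← abs_neg]
      field_simp; rw [neg_sub]
    rw [hdiff] at hlip
    have hSx : S k ^ j * (1 + x) ≤ C₀ := by
      calc S k ^ j * (1 + x) ≤ Real.exp (-(lam * x / 2)) * (1 + x) := by
            apply mul_le_mul_of_nonneg_right hsj_exp (by linarith)
        _ = (1 + x) * Real.exp (-(lam * x / 2)) := by ring
        _ ≤ C₀ * Real.exp (-(lam * x / 4)) := hC0' x hx0
        _ ≤ C₀ * 1 := by
            apply mul_le_mul_of_nonneg_left _ hC₀pos.le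
            exact Real.exp_le_one_iff.2 (neg_nonpos.2 (by positivity))
        _ = C₀ := mul_one _
    calc |S k ^ j * (γ k * (pgfEval (hp k j) (S k) - pgfEval (hp k j) (1 - lam / k)))|
        = S k ^ j * |γ k * (pgfEval (hp k j) (S k) - pgfEval (hp k j) (1 - lam / k))| := by
          rw [abs_mul, abs_of_nonneg hsj0]
      _ ≤ S k ^ j * (K₁ * (1 + x) * |Lk k - lam|) := by
          apply mul_le_mul_of_nonneg_left _ hsj0
          rw [hxdef]; exact hlip
      _ = (S k ^ j * (1 + x)) * (K₁ * |Lk k - lam|) := by ring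
      _ ≤ C₀ * (K₁ * |Lk k - lam|) := by
          apply mul_le_mul_of_nonneg_right hSx
          positivity
      _ < C₀ * (K₁ * ε₁) := by
          apply mul_lt_mul_of_pos_left _ hC₀pos
          exact mul_lt_mul_of_pos_left hLke hK₁
      _ ≤ ε / 3 := by
          have h1 : C₀ * (K₁ * ε₁) ≤ C₀ * (K₁ * (ε / (3 * (K₁ * C₀ + 1)))) := by
            apply mul_le_mul_of_nonneg_left _ hC₀pos.le
            exact mul_le_mul_of_nonneg_left hε₁eps hK₁.le
          refine h1.trans ?_
          have h2 : (0:ℝ) < K₁ * C₀ + 1 := by positivity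
          have heq : C₀ * (K₁ * (ε / (3 * (K₁ * C₀ + 1))))
              = (K₁ * C₀ / (K₁ * C₀ + 1)) * (ε / 3) := by
            field_simp
          rw [heq]
          exact mul_le_of_le_one_left (by positivity) (by rw [div_le_one h2]; linarith)
      
  -- Fk bound at lam
  have hFkb : |γ k * (pgfEval (hp k j) (1 - lam / k) - 1)| ≤ K₁ * (1 + x) * lam := by
    have hlip := hFkLip k hk1 j (1 - lam/k) 1 hv0 hv1 zero_le_one le_rfl
    rw [pgfEval_one (hhp k j hk1)] at hlip
    have hd : (k:ℝ) * |1 - lam/k - 1| = lam := by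
      rw [show (1 : ℝ) - lam/k - 1 = -(lam/k) by ring, abs_neg,
        abs_of_nonneg (by positivity : (0:ℝ) ≤ lam/k)]
      field_simp
    rw [hd] at hlip
    rw [hxdef]
    exact hlip
  have hFxb := hFb x hx0
  have hexp_half : Real.exp (-lam * x) ≤ Real.exp (-(lam * x / 2)) := by
    apply Real.exp_le_exp.2
    linarith [mul_nonneg hlam0 hx0]
  -- tail estimate
  have htail : ∀ B : ℝ, 0 ≤ B → B * C₀ ≤ D → a₂ ≤ x →
      B * ((1 + x) * Real.exp (-(lam * x / 2))) < ε / 3 := by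
    intro B hB0 hBD hax
    have h1 : (1 + x) * Real.exp (-(lam * x / 2)) ≤ C₀ * Real.exp (-(lam * x / 4)) :=
      hC0' x hx0
    have h2 : Real.exp (-(lam * x / 4)) ≤ Real.exp (-(lam * a₂ / 4)) := by
      apply Real.exp_le_exp.2
      have := mul_le_mul_of_nonneg_left hax hlam0
      linarith
    calc B * ((1 + x) * Real.exp (-(lam * x / 2)))
        ≤ B * (C₀ * Real.exp (-(lam * x / 4))) := mul_le_mul_of_nonneg_left h1 hB0
      _ = (B * C₀) * Real.exp (-(lam * x / 4)) := by ring
      _ ≤ D * Real.exp (-(lam * a₂ / 4)) := by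
          apply mul_le_mul hBD h2 (Real.exp_pos _).le hDpos.le
      _ < ε / 3 := hDa₂
  -- Term A2
  have hA2 : |S k ^ j * (γ k * (pgfEval (hp k j) (1 - lam / k) - 1) - F lam x)| < ε / 3 := by
    rcases le_or_gt x a₂ with hxa | hxa
    · have hmem : ((lam, x) : ℝ × ℝ) ∈ Icc (0:ℝ) lam ×ˢ Icc (0:ℝ) a₂ :=
        ⟨⟨hlam0, le_refl _⟩, ⟨hx0, hxa⟩⟩
      have hBek := hBe (lam, x) hmem
      dsimp only at hBek
      rw [hfl, Real.dist_eq] at hBek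
      calc |S k ^ j * (γ k * (pgfEval (hp k j) (1 - lam / k) - 1) - F lam x)|
          = S k ^ j * |γ k * (pgfEval (hp k j) (1 - lam / k) - 1) - F lam x| := by
            rw [abs_mul, abs_of_nonneg hsj0]
        _ ≤ 1 * |γ k * (pgfEval (hp k j) (1 - lam / k) - 1) - F lam x| :=
            mul_le_mul_of_nonneg_right hsj1 (abs_nonneg _)
        _ = |F lam x - γ k * (pgfEval (hp k j) (1 - lam / k) - 1)| := by
            rw [one_mul, abs_sub_comm]
        _ < ε / 3 := hBek
    · have htri : |γ k * (pgfEval (hp k j) (1 - lam / k) - 1) - F lam x|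
          ≤ |γ k * (pgfEval (hp k j) (1 - lam / k) - 1)| + |F lam x| := abs_sub _ _
      have h1 : |γ k * (pgfEval (hp k j) (1 - lam / k) - 1) - F lam x|
          ≤ lam * (K₁ + K) * (1 + x) := by nlinarith [hFkb, hFxb, htri]
      have hBD : (lam * (K₁ + K)) * C₀ ≤ D := by
        rw [hDdef]
        have h2 : 0 ≤ lam * K₁ * C₀ := by positivity
        have h3 : 0 ≤ lam * K * C₀ := mul_nonneg (mul_nonneg hlam0 hK) hC₀pos.le
        nlinarith
      calc |S k ^ j * (γ k * (pgfEval (hp k j) (1 - lam / k) - 1) - F lam x)|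
          = S k ^ j * |γ k * (pgfEval (hp k j) (1 - lam / k) - 1) - F lam x| := by
            rw [abs_mul, abs_of_nonneg hsj0]
        _ ≤ Real.exp (-(lam * x / 2)) * (lam * (K₁ + K) * (1 + x)) :=
            mul_le_mul hsj_exp h1 (abs_nonneg _) (Real.exp_pos _).le
        _ = (lam * (K₁ + K)) * ((1 + x) * Real.exp (-(lam * x / 2))) := by ring
        _ < ε / 3 := htail _ (mul_nonneg hlam0 (by linarith)) hBD hxa.le
  -- Term A3
  have hA3 : |(S k ^ j - Real.exp (-lam * x)) * F lam x| < ε / 3 := by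
    rcases le_or_gt x a₂ with hxa | hxa
    · rw [← htj, abs_mul]
      have hGle : C₁ * (lam * (K * (1 + a₂))) ≤ G := by rw [hGdef]; linarith
      calc |S k ^ j - T k ^ j| * |F lam x|
          ≤ (C₁ * |Dk k|) * (lam * (K * (1 + x))) :=
            mul_le_mul hpow hFxb (abs_nonneg _) (by positivity)
        _ ≤ (C₁ * |Dk k|) * (lam * (K * (1 + a₂))) := by gcongr
        _ = (C₁ * (lam * (K * (1 + a₂)))) * |Dk k| := by ring
        _ ≤ G * |Dk k| := mul_le_mul_of_nonneg_right hGle (abs_nonneg _)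
        _ < G * (ε / (3 * G)) := mul_lt_mul_of_pos_left hDke hGpos
        _ = ε / 3 := by field_simp
    · have h2 : |S k ^ j - Real.exp (-lam * x)| ≤ 2 * Real.exp (-(lam * x / 2)) := by
        have htri := abs_sub (S k ^ j) (Real.exp (-lam * x))
        rw [abs_of_nonneg hsj0, abs_of_nonneg (Real.exp_pos _).le] at htri
        linarith [hsj_exp, hexp_half]
      have hBD : (2 * lam * K) * C₀ ≤ D := by
        rw [hDdef]
        have h3 : 0 ≤ lam * (2 * K₁ + K) * C₀ :=
          mul_nonneg (mul_nonneg hlam0 (by linarith)) hC₀pos.le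
        nlinarith
      calc |(S k ^ j - Real.exp (-lam * x)) * F lam x|
          = |S k ^ j - Real.exp (-lam * x)| * |F lam x| := abs_mul _ _
        _ ≤ (2 * Real.exp (-(lam * x / 2))) * (lam * (K * (1 + x))) :=
            mul_le_mul h2 hFxb (abs_nonneg _) (by positivity)
        _ = (2 * lam * K) * ((1 + x) * Real.exp (-(lam * x / 2))) := by ring
        _ < ε / 3 := htail _ (by positivity) hBD hxa.le
  -- assemble
  have hid : γ k * S k ^ j * (pgfEval (hp k j) (S k) - 1) - Real.exp (-lam * x) * F lam x
      = S k ^ j * (γ k * (pgfEval (hp k j) (S k) - pgfEval (hp k j) (1 - lam / k)))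
      + S k ^ j * (γ k * (pgfEval (hp k j) (1 - lam / k) - 1) - F lam x)
      + (S k ^ j - Real.exp (-lam * x)) * F lam x := by ring
  rw [hid]
  have ht1 := abs_add_le (S k ^ j * (γ k * (pgfEval (hp k j) (S k) - pgfEval (hp k j) (1 - lam / k)))
      + S k ^ j * (γ k * (pgfEval (hp k j) (1 - lam / k) - 1) - F lam x))
      ((S k ^ j - Real.exp (-lam * x)) * F lam x)
  have ht2 := abs_add_le (S k ^ j * (γ k * (pgfEval (hp k j) (S k) - pgfEval (hp k j) (1 - lam / k))))
      (S k ^ j * (γ k * (pgfEval (hp k j) (1 - lam / k) - 1) - F lam x))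
  linarith
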